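/- Let M be a simplicial complex, let {a,b} ∈ M be an edge, and let M' be the contraction of a onto b. Let B denote the complex whose faces are the sets S and S ∪ {b} for S ∈ ast(b, lk(a,M)) (i.e., B = {b} * ast(b, lk(a,M))). Then M' = ast(a,M) ∪ B, and ast(a,M) ∩ B = lk(a,M) ∪ {S ∪ {b} : S ∈ lk(a,M) ∩ lk(b,M)}. -/
import Mathlib


open Finset

variable {V : Type*} [DecidableEq V]

/-- A (finite) simplicial complex, given by its finite family of faces:
closed under subsets and containing the empty set.  The vertices of `K` are
exactly the elements `v` with `{v} ∈ K`. -/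
def IsComplex (K : Finset (Finset V)) : Prop :=
  ∅ ∈ K ∧ ∀ S ∈ K, ∀ T ⊆ S, T ∈ K

/-- The dimension of `K` : the maximum of `|F| - 1` over the faces `F` of `K`. -/
def dimC (K : Finset (Finset V)) : ℤ :=
  ((K.sup Finset.card : ℕ) : ℤ) - 1

/-- `T` is a missing face of `K` : a set of vertices of `K` which is not a face of `K`
while all its proper subsets are faces of `K`. -/
def IsMissingFace (K : Finset (Finset V)) (T : Finset V) : Prop :=
  (∀ x ∈ T, ({x} : Finset V) ∈ K) ∧ T ∉ K ∧ ∀ S ⊂ T, S ∈ K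

/-- The contraction of `u` onto `v` is admissible if no missing face of `K` of
dimension `≤ dim K` contains both `u` and `v`. -/
def Admissible (K : Finset (Finset V)) (u v : V) : Prop :=
  ∀ T : Finset V, IsMissingFace K T → (T.card : ℤ) - 1 ≤ dimC K → ¬(u ∈ T ∧ v ∈ T)

/-- The contraction of `u` onto `v`:
`K' = {T ∈ K : u ∉ T} ∪ {(T \ {u}) ∪ {v} : u ∈ T ∈ K}`. -/
def contractC (K : Finset (Finset V)) (u v : V) : Finset (Finset V) :=
  K.filter (fun T => u ∉ T) ∪ (K.filter (fun T => u ∈ T)).image (fun T => insert v (T.erase u))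

/-- The link of a face: `lk(S,K) = {T ∈ K : T ∩ S = ∅ ∧ T ∪ S ∈ K}`. -/
def linkC (K : Finset (Finset V)) (S : Finset V) : Finset (Finset V) :=
  K.filter (fun T => T ∩ S = ∅ ∧ T ∪ S ∈ K)

/-- The `m`-skeleton: all faces of dimension at most `m`. -/
def skelC (K : Finset (Finset V)) (m : ℤ) : Finset (Finset V) :=
  K.filter (fun F => (F.card : ℤ) - 1 ≤ m)

/-- The antistar of a vertex: `ast(v,K) = {T ∈ K : v ∉ T}`. -/
def astC (K : Finset (Finset V)) (v : V) : Finset (Finset V) :=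
  K.filter fun T => v ∉ T

/-- `B = {b} * ast(b, lk(a,M))`: the faces are the sets `S` and `S ∪ {b}`
for `S ∈ ast(b, lk(a,M))`. -/
def coneB (M : Finset (Finset V)) (a b : V) : Finset (Finset V) :=
  astC (linkC M {a}) b ∪ (astC (linkC M {a}) b).image fun S => insert b S

/-- For an edge `{a,b}` of `M`, with `M'` the contraction of `a`
onto `b` and `B = {b} * ast(b, lk(a,M))`: `M' = ast(a,M) ∪ B` and
`ast(a,M) ∩ B = lk(a,M) ∪ {S ∪ {b} : S ∈ lk(a,M) ∩ lk(b,M)}`. -/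
lemma mem_linkC_singleton {M : Finset (Finset V)} {a : V} {T : Finset V} :
    T ∈ linkC M {a} ↔ T ∈ M ∧ a ∉ T ∧ insert a T ∈ M := by
  have h : T ∪ {a} = insert a T := by ext x; simp [or_comm]
  simp [linkC, Finset.mem_filter, h,
    ← Finset.disjoint_iff_inter_eq_empty, Finset.disjoint_singleton_right, and_assoc]

lemma mem_astlink {M : Finset (Finset V)} {a b : V} {S : Finset V} :
    S ∈ astC (linkC M {a}) b ↔ (S ∈ M ∧ a ∉ S ∧ insert a S ∈ M) ∧ b ∉ S := by
  simp only [astC, Finset.mem_filter, mem_linkC_singleton]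

theorem contraction_eq_antistar_union_cone
    (M : Finset (Finset V)) (hM : IsComplex M) (a b : V) (hab : a ≠ b)
    (he : ({a, b} : Finset V) ∈ M) :
    contractC M a b = astC M a ∪ coneB M a b ∧
    astC M a ∩ coneB M a b =
      linkC M {a} ∪ (linkC M {a} ∩ linkC M {b}).image (fun S => insert b S) := by
  obtain ⟨-, hdown⟩ := hM
  constructor
  · ext T
    simp only [contractC, coneB, Finset.mem_union, Finset.mem_filter, Finset.mem_image,
      astC, mem_astlink, mem_linkC_singleton]
    constructor
    · rintro (⟨hTM, haT⟩ | ⟨S, ⟨hSM, haS⟩, rfl⟩)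
      · exact Or.inl ⟨hTM, haT⟩
      · refine Or.inr (Or.inr ⟨(S.erase a).erase b, ⟨⟨?_, ?_, ?_⟩, ?_⟩, ?_⟩)
        · exact hdown S hSM _ ((Finset.erase_subset _ _).trans (Finset.erase_subset _ _))
        · simp [Finset.mem_erase]
        · refine hdown S hSM _ ?_
          intro x hx
          rcases Finset.mem_insert.mp hx with rfl | hx
          · exact haS
          · exact Finset.mem_of_mem_erase (Finset.mem_of_mem_erase hx)
        · simp
        · by_cases hbS : b ∈ S.erase a
          · rw [Finset.insert_erase hbS]
            exact (Finset.insert_eq_self.mpr hbS).symm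
          · rw [Finset.erase_eq_of_notMem hbS]
    · rintro (⟨hTM, haT⟩ | ⟨⟨hTM, haT, -⟩, -⟩ | ⟨S, ⟨⟨hSM, haS, hiS⟩, hbS⟩, rfl⟩)
      · exact Or.inl ⟨hTM, haT⟩
      · exact Or.inl ⟨hTM, haT⟩
      · refine Or.inr ⟨insert a S, ⟨hiS, Finset.mem_insert_self a S⟩, ?_⟩
        rw [Finset.erase_insert haS]
  · ext T
    simp only [coneB, Finset.mem_union, Finset.mem_inter, Finset.mem_image,
      astC, Finset.mem_filter, mem_astlink, mem_linkC_singleton]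
    constructor
    · rintro ⟨⟨hTM, haT⟩, ⟨⟨-, -, hiT⟩, -⟩ | ⟨S, ⟨⟨hSM, haS, hiS⟩, hbS⟩, rfl⟩⟩
      · exact Or.inl ⟨hTM, haT, hiT⟩
      · exact Or.inr ⟨S, ⟨⟨hSM, haS, hiS⟩, hSM, hbS, hTM⟩, rfl⟩
    · rintro (⟨hTM, haT, hiT⟩ | ⟨S, ⟨⟨hSM, haS, hiS⟩, -, hbS, hbM⟩, rfl⟩)
      · refine ⟨⟨hTM, haT⟩, ?_⟩
        by_cases hbT : b ∈ T
        · have h1 : insert a (T.erase b) ∈ M := by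
            refine hdown (insert a T) hiT _ ?_
            intro x hx
            simp only [Finset.mem_insert, Finset.mem_erase] at hx ⊢
            tauto
          refine Or.inr ⟨T.erase b, ⟨⟨hdown T hTM _ (Finset.erase_subset _ _), ?_, h1⟩, ?_⟩,
            Finset.insert_erase hbT⟩
          · simp [Finset.mem_erase, haT]
          · simp
        · exact Or.inl ⟨⟨hTM, haT, hiT⟩, hbT⟩
      · refine ⟨⟨hbM, ?_⟩, Or.inr ⟨S, ⟨⟨hSM, haS, hiS⟩, hbS⟩, rfl⟩⟩
        simp only [Finset.mem_insert]
        rintro (rfl | h)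
        · exact hab rfl
        · exact haS h
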